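/- Let A be a C*-algebra with Property (SP), let x ∈ A be a positive element with ‖x‖ = 1, and let ε > 0. Then there exists a nonzero projection p in the hereditary subalgebra closure(x A x) such that for every nonzero projection q ≤ p one has ‖q x q − q‖ < ε, ‖q x − x q‖ < ε, and ‖q x q‖ > 1 − ε. -/

import Mathlib

open Matrix
open scoped ComplexOrder

noncomputable section

/-- A projection in a `*`-algebra: a selfadjoint idempotent. -/
def IsProjectionElem {A : Type*} [Mul A] [Star A] (p : A) : Prop :=
  star p = p ∧ p * p = p

/-- Murray-von Neumann equivalence of projections. -/
def MvNEquiv {A : Type*} [Mul A] [Star A] (p q : A) : Prop :=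
  ∃ v : A, star v * v = p ∧ v * star v = q

/-- `p` is Murray-von Neumann equivalent to a subprojection of `q`. -/
def MvNSubEquiv {A : Type*} [Mul A] [Star A] (p q : A) : Prop :=
  ∃ v : A, star v * v = p ∧ q * (v * star v) = v * star v

/-- The hereditary subalgebra generated by `x`: the closure of `x A x`. -/
def herSub {A : Type*} [Mul A] [TopologicalSpace A] (x : A) : Set A :=
  closure {y : A | ∃ a : A, y = x * a * x}

/-- `p` is Murray-von Neumann equivalent to a projection in the hereditary
subalgebra generated by `x`. -/
def MvNInHer {A : Type*} [Mul A] [Star A] [TopologicalSpace A] (p x : A) : Prop :=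
  ∃ q : A, IsProjectionElem q ∧ q ∈ herSub x ∧ MvNEquiv p q

/-- A hereditary subalgebra: a closed `*`-subalgebra `B` such that whenever
`0 ≤ a ≤ b` and `b ∈ B`, also `a ∈ B` (positivity expressed via squares). -/
def IsHerSub {A : Type*} [NonUnitalNonAssocRing A] [Star A] [SMul ℂ A] [TopologicalSpace A]
    (B : Set A) : Prop :=
  IsClosed B ∧ (0 : A) ∈ B ∧ (∀ x ∈ B, ∀ y ∈ B, x + y ∈ B) ∧
    (∀ x ∈ B, ∀ y ∈ B, x * y ∈ B) ∧ (∀ (c : ℂ), ∀ x ∈ B, c • x ∈ B) ∧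
    (∀ x ∈ B, star x ∈ B) ∧
    (∀ a b : A, (∃ z : A, a = star z * z) → (∃ z : A, b - a = star z * z) → b ∈ B → a ∈ B)

/-- Property (SP): every nonzero hereditary subalgebra contains a nonzero projection. -/
def PropertySP (A : Type*) [NonUnitalNonAssocRing A] [Star A] [SMul ℂ A] [TopologicalSpace A] :
    Prop :=
  ∀ B : Set A, IsHerSub B → (∃ b ∈ B, b ≠ 0) → ∃ p ∈ B, IsProjectionElem p ∧ p ≠ 0


section CuntzAux

open scoped CStarAlgebra

lemma aux_tk {ν : ℝ} (hν : 1 < ν) (t : ℝ) :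
    t * min (ν ^ 2 * t) (max t ν⁻¹)⁻¹ = min (ν * t) 1 ^ 2 := by
  have hν0 : 0 < ν := lt_trans one_pos hν
  rcases le_or_gt t ν⁻¹ with h | h
  · rw [max_eq_right h, inv_inv]
    have h1 : ν ^ 2 * t ≤ ν := by
      have h2 := mul_le_mul_of_nonneg_left h (le_of_lt (by positivity : (0:ℝ) < ν ^ 2))
      have h3 : ν * ν⁻¹ = 1 := mul_inv_cancel₀ hν0.ne'
      nlinarith
    have h2 : ν * t ≤ 1 := by
      have := mul_le_mul_of_nonneg_left h hν0.le
      rwa [mul_inv_cancel₀ hν0.ne'] at this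
    rw [min_eq_left h1, min_eq_left h2]
    ring
  · have ht0 : 0 < t := lt_trans (by positivity) h
    rw [max_eq_left h.le]
    have h2 : (1:ℝ) ≤ ν * t := by
      rw [← mul_inv_cancel₀ hν0.ne']
      exact mul_le_mul_of_nonneg_left h.le hν0.le
    have h1 : t⁻¹ ≤ ν ^ 2 * t := by
      have ht1 : t⁻¹ < ν := by
        rw [inv_lt_comm₀ ht0 hν0]; exact h
      refine ht1.le.trans ?_
      nlinarith
    rw [min_eq_right h1, min_eq_right h2, mul_inv_cancel₀ ht0.ne', one_pow]

lemma aux_m_mem {ν t : ℝ} (hν : 0 < ν) (ht : 0 ≤ t) :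
    0 ≤ min (ν * t) 1 ^ 2 ∧ min (ν * t) 1 ^ 2 ≤ 1 := by
  constructor
  · positivity
  · have h1 : min (ν * t) 1 ≤ 1 := min_le_right _ _
    have h0 : 0 ≤ min (ν * t) 1 := le_min (by positivity) zero_le_one
    nlinarith

lemma aux_bound {ν : ℝ} (hν : 1 < ν) {t : ℝ} (ht : 0 ≤ t) :
    |(1 - min (ν * t) 1 ^ 2) * ((1 - min (ν * t) 1 ^ 2) * t)| ≤ ν⁻¹ := by
  have hν0 : 0 < ν := lt_trans one_pos hν
  obtain ⟨hm0, hm1⟩ := aux_m_mem hν0 ht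
  rcases le_or_gt ν⁻¹ t with h | h
  · have : (1:ℝ) ≤ ν * t := by
      rw [← mul_inv_cancel₀ hν0.ne']
      exact mul_le_mul_of_nonneg_left h hν0.le
    rw [min_eq_right this, one_pow, sub_self, zero_mul, abs_zero]
    positivity
  · have habs : |(1 - min (ν * t) 1 ^ 2) * ((1 - min (ν * t) 1 ^ 2) * t)| =
        (1 - min (ν * t) 1 ^ 2) * ((1 - min (ν * t) 1 ^ 2) * t) := by
      apply abs_of_nonneg
      have := sub_nonneg.mpr hm1
      positivity
    rw [habs]
    have hM0 : 0 ≤ 1 - min (ν * t) 1 ^ 2 := sub_nonneg.mpr hm1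
    have hM1 : 1 - min (ν * t) 1 ^ 2 ≤ 1 := by nlinarith
    calc (1 - min (ν * t) 1 ^ 2) * ((1 - min (ν * t) 1 ^ 2) * t)
        ≤ (1 - min (ν * t) 1 ^ 2) * t := by
          refine mul_le_of_le_one_left (by positivity) hM1
      _ ≤ t := mul_le_of_le_one_left ht hM1
      _ ≤ ν⁻¹ := h.le

lemma aux_clamp01 (u : ℝ) : 0 ≤ max 0 (min u 1) ∧ max 0 (min u 1) ≤ 1 :=
  ⟨le_max_left _ _, max_le zero_le_one (min_le_right _ _)⟩

lemma aux_clamp_eq_zero {u : ℝ} (hu : u ≤ 0) : max 0 (min u 1) = 0 :=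
  max_eq_left ((min_le_left _ _).trans hu)

lemma aux_clamp_eq_one {u : ℝ} (hu : 1 ≤ u) : max 0 (min u 1) = 1 := by
  rw [min_eq_right hu]; exact max_eq_right zero_le_one

lemma aux_fk {δ : ℝ} (hδ0 : 0 < δ) (hδ2 : δ ≤ 1/2) (t : ℝ) :
    t * (max 0 (min ((t - (1 - δ)) * (2/δ)) 1) / max t (1/2))
      = max 0 (min ((t - (1 - δ)) * (2/δ)) 1) := by
  rcases le_or_gt (1/2 : ℝ) t with h | h
  · rw [max_eq_left h, mul_comm, div_mul_cancel₀]
    positivity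
  · have harg : (t - (1 - δ)) * (2/δ) ≤ 0 := by
      apply mul_nonpos_of_nonpos_of_nonneg
      · linarith
      · positivity
    rw [aux_clamp_eq_zero harg]
    simp

lemma aux_gf {δ : ℝ} (hδ0 : 0 < δ) (t : ℝ) :
    max 0 (min ((t - (1 - 2*δ)) / δ) 1) * max 0 (min ((t - (1 - δ)) * (2/δ)) 1)
      = max 0 (min ((t - (1 - δ)) * (2/δ)) 1) := by
  rcases le_or_gt t (1 - δ) with h | h
  · have harg : (t - (1 - δ)) * (2/δ) ≤ 0 := by
      apply mul_nonpos_of_nonpos_of_nonneg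
      · linarith
      · positivity
    rw [aux_clamp_eq_zero harg, mul_zero]
  · have harg : (1:ℝ) ≤ (t - (1 - 2*δ)) / δ := by
      rw [le_div_iff₀ hδ0]; linarith
    rw [aux_clamp_eq_one harg, one_mul]

lemma aux_g_est {δ : ℝ} (hδ0 : 0 < δ) {t : ℝ} (h0 : 0 ≤ t) (h1 : t ≤ 1) :
    |t * max 0 (min ((t - (1 - 2*δ)) / δ) 1) - max 0 (min ((t - (1 - 2*δ)) / δ) 1)| ≤ 2*δ := by
  obtain ⟨hG0, hG1⟩ := aux_clamp01 ((t - (1 - 2*δ)) / δ)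
  rcases le_or_gt t (1 - 2*δ) with h | h
  · have harg : (t - (1 - 2*δ)) / δ ≤ 0 := by
      apply div_nonpos_of_nonpos_of_nonneg <;> linarith
    rw [aux_clamp_eq_zero harg]
    simp only [mul_zero, sub_zero, abs_zero]
    positivity
  · have he : t * max 0 (min ((t - (1 - 2*δ)) / δ) 1) - max 0 (min ((t - (1 - 2*δ)) / δ) 1)
        = max 0 (min ((t - (1 - 2*δ)) / δ) 1) * (t - 1) := by ring
    rw [he, abs_mul, abs_of_nonneg hG0, abs_of_nonpos (by linarith)]
    calc max 0 (min ((t - (1 - 2*δ)) / δ) 1) * -(t - 1) ≤ 1 * (2*δ) := by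
          apply mul_le_mul hG1 (by linarith) (by linarith) zero_le_one
      _ = 2*δ := one_mul _

lemma aux_f_one {δ : ℝ} (hδ0 : 0 < δ) :
    max 0 (min ((1 - (1 - δ)) * (2/δ)) 1) = 1 := by
  have : (1 - (1 - δ)) * (2/δ) = 2 := by field_simp; ring
  rw [this]
  exact aux_clamp_eq_one one_le_two

variable {A : Type*} [NonUnitalCStarAlgebra A]

lemma herSub_trans {y b : A} (hb : b ∈ herSub y) : herSub b ⊆ herSub y := by
  refine closure_minimal ?_ isClosed_closure
  rintro v ⟨c, rfl⟩
  refine map_mem_closure (f := fun z : A => z * c * z) (by fun_prop) hb ?_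
  rintro z ⟨a, rfl⟩
  exact ⟨a * (y * c * y) * a, by simp only [mul_assoc]⟩

lemma key_estimate {B : Type*} [CStarAlgebra B] [PartialOrder B] [StarOrderedRing B]
    {a b u : B} (ha : 0 ≤ a) (hab : a ≤ b) (hu : IsSelfAdjoint u) (hu1 : ‖u‖ ≤ 1)
    {r : ℝ} (hr : 0 ≤ r) (hubu : ‖(1 - u) * b * (1 - u)‖ ≤ r ^ 2) :
    ‖a - u * a * u‖ ≤ 2 * r * Real.sqrt ‖a‖ := by
  have ha_sa : IsSelfAdjoint a := .of_nonneg ha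
  set s := CFC.sqrt a with hs
  have hss : s * s = a := CFC.sqrt_mul_sqrt_self a ha
  have hs_sa : IsSelfAdjoint s := .of_nonneg (CFC.sqrt_nonneg a)
  have hs_norm : ‖s‖ = Real.sqrt ‖a‖ := by
    have : ‖a‖ = ‖s‖ ^ 2 := by
      conv_lhs => rw [← hss]
      nth_rewrite 1 [← hs_sa.star_eq]
      rw [CStarRing.norm_star_mul_self, sq]
    rw [this, Real.sqrt_sq (norm_nonneg s)]
  have h1u : star (1 - u) = 1 - u := ((IsSelfAdjoint.one (R := B)).sub hu).star_eq
  have hv : ‖(1 - u) * s‖ ≤ r := by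
    have h2 : ‖(1 - u) * s‖ ^ 2 = ‖((1 - u) * s) * star ((1 - u) * s)‖ := by
      rw [CStarRing.norm_self_mul_star, sq]
    have h3 : ((1 - u) * s) * star ((1 - u) * s) = (1 - u) * a * (1 - u) := by
      rw [StarMul.star_mul, hs_sa.star_eq, h1u, mul_assoc, ← mul_assoc s s, hss, ← mul_assoc]
    have h4 : ‖(1 - u) * a * (1 - u)‖ ≤ ‖(1 - u) * b * (1 - u)‖ := by
      have hcong : star (1 - u) * a * (1 - u) ≤ star (1 - u) * b * (1 - u) :=
        star_left_conjugate_le_conjugate hab (1 - u)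
      rw [h1u] at hcong
      have hpos : 0 ≤ (1 - u) * a * (1 - u) := by
        have := star_left_conjugate_nonneg ha (1 - u)
        rwa [h1u] at this
      exact CStarAlgebra.norm_le_norm_of_nonneg_of_le hpos hcong
    have h5 : ‖(1 - u) * s‖ ^ 2 ≤ r ^ 2 := by
      rw [h2, h3]; exact h4.trans hubu
    nlinarith [norm_nonneg ((1 - u) * s)]
  calc ‖a - u * a * u‖ = ‖(a - u * a) + (u * a - u * a * u)‖ := by rw [sub_add_sub_cancel]
    _ ≤ ‖a - u * a‖ + ‖u * a - u * a * u‖ := norm_add_le _ _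
    _ ≤ r * ‖s‖ + 1 * (r * ‖s‖) := by
        have e1 : a - u * a = ((1 - u) * s) * s := by
          rw [mul_assoc, hss, sub_mul, one_mul]
        have b1 : ‖a - u * a‖ ≤ r * ‖s‖ := by
          rw [e1]
          calc ‖((1 - u) * s) * s‖ ≤ ‖(1 - u) * s‖ * ‖s‖ := norm_mul_le _ _
            _ ≤ r * ‖s‖ := by gcongr
        have e2 : u * a - u * a * u = u * (a - a * u) := by
          rw [mul_sub, mul_assoc]
        have e3 : a - a * u = star (a - u * a) := by
          rw [star_sub, ha_sa.star_eq, StarMul.star_mul, ha_sa.star_eq, hu.star_eq]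
        have b2 : ‖u * a - u * a * u‖ ≤ 1 * (r * ‖s‖) := by
          rw [e2]
          calc ‖u * (a - a * u)‖ ≤ ‖u‖ * ‖a - a * u‖ := norm_mul_le _ _
            _ ≤ 1 * (r * ‖s‖) := by
                refine mul_le_mul hu1 ?_ (norm_nonneg _) zero_le_one
                rw [e3, norm_star]; exact b1
        gcongr
    _ = 2 * r * ‖s‖ := by ring
    _ = 2 * r * Real.sqrt ‖a‖ := by rw [hs_norm]

lemma mem_herSub_of_le {a b : A} (ha : ∃ z : A, a = star z * z)
    (hab : ∃ z : A, b - a = star z * z) : a ∈ herSub b := by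
  obtain ⟨z, hz⟩ := ha
  obtain ⟨w, hw⟩ := hab
  have hb_eq : b = star w * w + star z * z := by rw [← hz, ← hw]; abel
  have hb_sa : IsSelfAdjoint b := by
    rw [hb_eq]; exact (IsSelfAdjoint.star_mul_self w).add (IsSelfAdjoint.star_mul_self z)
  letI := CStarAlgebra.spectralOrder (A⁺¹)
  haveI := CStarAlgebra.spectralOrderedRing (A⁺¹)
  have ha' : (0 : A⁺¹) ≤ (a : A⁺¹) := by
    have h1 : (a : A⁺¹) = star (z : A⁺¹) * (z : A⁺¹) := by
      rw [hz, Unitization.inr_mul, Unitization.inr_star]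
    rw [h1]; exact star_mul_self_nonneg _
  have hab' : (a : A⁺¹) ≤ (b : A⁺¹) := by
    rw [← sub_nonneg, ← Unitization.inr_sub ℂ b a]
    have h1 : ((b - a : A) : A⁺¹) = star (w : A⁺¹) * (w : A⁺¹) := by
      rw [hw, Unitization.inr_mul, Unitization.inr_star]
    rw [h1]; exact star_mul_self_nonneg _
  have hb' : (0 : A⁺¹) ≤ (b : A⁺¹) := ha'.trans hab'
  have hspec : ∀ t ∈ spectrum ℝ (b : A⁺¹), 0 ≤ t := fun t ht =>
    spectrum_nonneg_of_nonneg hb' ht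
  rw [herSub, Metric.mem_closure_iff]
  intro ε hε
  obtain ⟨ν, hν⟩ := exists_gt (max 1 (4 * ‖a‖ / ε ^ 2))
  have hν1 : 1 < ν := (le_max_left _ _).trans_lt hν
  have hνC : 4 * ‖a‖ / ε ^ 2 < ν := (le_max_right _ _).trans_lt hν
  have hν0 : 0 < ν := lt_trans one_pos hν1
  -- the functions
  have hm_cont : Continuous (fun t : ℝ => min (ν * t) 1 ^ 2) := by fun_prop
  have hκ_cont : Continuous (fun t : ℝ => min (ν ^ 2 * t) (max t ν⁻¹)⁻¹) := by
    refine Continuous.min (by fun_prop) ?_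
    exact (continuous_id.max continuous_const).inv₀
      fun t => (lt_max_of_lt_right (by positivity)).ne'
  have hm0 : (fun t : ℝ => min (ν * t) 1 ^ 2) 0 = 0 := by
    simp only [mul_zero]
    rw [min_eq_left zero_le_one]
    norm_num
  have hκ0 : (fun t : ℝ => min (ν ^ 2 * t) (max t ν⁻¹)⁻¹) 0 = 0 := by
    simp only [mul_zero]
    rw [max_eq_right (by positivity : (0:ℝ) ≤ ν⁻¹), inv_inv]
    exact min_eq_left hν0.le
  set u : A := cfcₙ (fun t : ℝ => min (ν * t) 1 ^ 2) b with hu_def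
  set k : A := cfcₙ (fun t : ℝ => min (ν ^ 2 * t) (max t ν⁻¹)⁻¹) b with hk_def
  have hu_bk : u = b * k := by
    have h1 : cfcₙ (fun t : ℝ => t * min (ν ^ 2 * t) (max t ν⁻¹)⁻¹) b
        = cfcₙ (fun t : ℝ => min (ν * t) 1 ^ 2) b :=
      cfcₙ_congr fun t _ => aux_tk hν1 t
    have h2 : cfcₙ (fun t : ℝ => t * min (ν ^ 2 * t) (max t ν⁻¹)⁻¹) b
        = cfcₙ (fun t : ℝ => t) b * k := by
      rw [hk_def]
      exact cfcₙ_mul _ _ b (by fun_prop) rfl hκ_cont.continuousOn hκ0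
    rw [hu_def, ← h1, h2, cfcₙ_id' ℝ b]
  have hu_kb : u = k * b := by
    have h1 : cfcₙ (fun t : ℝ => min (ν ^ 2 * t) (max t ν⁻¹)⁻¹ * t) b
        = cfcₙ (fun t : ℝ => min (ν * t) 1 ^ 2) b :=
      cfcₙ_congr fun t _ => by rw [mul_comm]; exact aux_tk hν1 t
    have h2 : cfcₙ (fun t : ℝ => min (ν ^ 2 * t) (max t ν⁻¹)⁻¹ * t) b
        = k * cfcₙ (fun t : ℝ => t) b := by
      rw [hk_def]
      exact cfcₙ_mul _ _ b hκ_cont.continuousOn hκ0 (by fun_prop) rfl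
    rw [hu_def, ← h1, h2, cfcₙ_id' ℝ b]
  refine ⟨u * a * u, ⟨k * a * k, ?_⟩, ?_⟩
  · nth_rewrite 1 [hu_bk]
    rw [hu_kb]
    simp only [mul_assoc]
  · rw [dist_eq_norm]
    -- pass to the unitization
    have hU : (u : A⁺¹) = cfc (fun t : ℝ => min (ν * t) 1 ^ 2) (b : A⁺¹) :=
      Unitization.real_cfcₙ_eq_cfc_inr b _ hm0
    have hU_sa : IsSelfAdjoint (cfc (fun t : ℝ => min (ν * t) 1 ^ 2) (b : A⁺¹)) :=
      cfc_predicate _ _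
    have hU_norm : ‖cfc (fun t : ℝ => min (ν * t) 1 ^ 2) (b : A⁺¹)‖ ≤ 1 := by
      refine norm_cfc_le zero_le_one fun t ht => ?_
      obtain ⟨h1, h2⟩ := aux_m_mem hν0 (hspec t ht)
      rw [Real.norm_eq_abs, abs_of_nonneg h1]
      exact h2
    have hb_sa' : IsSelfAdjoint (b : A⁺¹) := hb'.isSelfAdjoint
    have hcomm : cfc (fun t : ℝ => min (ν * t) 1 ^ 2) (b : A⁺¹) * (b : A⁺¹)
        = (b : A⁺¹) * cfc (fun t : ℝ => min (ν * t) 1 ^ 2) (b : A⁺¹) := by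
      have e1 : cfc (fun t : ℝ => min (ν * t) 1 ^ 2 * t) (b : A⁺¹)
          = cfc (fun t : ℝ => min (ν * t) 1 ^ 2) (b : A⁺¹) * cfc (fun t : ℝ => t) (b : A⁺¹) :=
        cfc_mul _ _ _ (by fun_prop) (by fun_prop)
      have e2 : cfc (fun t : ℝ => t * min (ν * t) 1 ^ 2) (b : A⁺¹)
          = cfc (fun t : ℝ => t) (b : A⁺¹) * cfc (fun t : ℝ => min (ν * t) 1 ^ 2) (b : A⁺¹) :=
        cfc_mul _ _ _ (by fun_prop) (by fun_prop)
      have e3 : cfc (fun t : ℝ => min (ν * t) 1 ^ 2 * t) (b : A⁺¹)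
          = cfc (fun t : ℝ => t * min (ν * t) 1 ^ 2) (b : A⁺¹) :=
        cfc_congr fun t _ => mul_comm _ _
      rw [cfc_id' ℝ (b : A⁺¹)] at e1 e2
      rw [← e1, e3, e2]
    set U := cfc (fun t : ℝ => min (ν * t) 1 ^ 2) (b : A⁺¹) with hUdef
    have hkey1 : (1 - U) * (b : A⁺¹) * (1 - U)
        = cfc (fun t : ℝ => (1 - min (ν * t) 1 ^ 2) * ((1 - min (ν * t) 1 ^ 2) * t)) (b : A⁺¹) := by
      have e1 : cfc (fun t : ℝ => (1 - min (ν * t) 1 ^ 2) * ((1 - min (ν * t) 1 ^ 2) * t)) (b : A⁺¹)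
          = cfc (fun t : ℝ => 1 - min (ν * t) 1 ^ 2) (b : A⁺¹)
            * cfc (fun t : ℝ => (1 - min (ν * t) 1 ^ 2) * t) (b : A⁺¹) :=
        cfc_mul _ _ _ (by fun_prop) (by fun_prop)
      have e2 : cfc (fun t : ℝ => (1 - min (ν * t) 1 ^ 2) * t) (b : A⁺¹)
          = cfc (fun t : ℝ => 1 - min (ν * t) 1 ^ 2) (b : A⁺¹) * cfc (fun t : ℝ => t) (b : A⁺¹) :=
        cfc_mul _ _ _ (by fun_prop) (by fun_prop)
      have e3 : cfc (fun t : ℝ => 1 - min (ν * t) 1 ^ 2) (b : A⁺¹) = 1 - U := by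
        rw [hUdef, ← cfc_const_one ℝ (b : A⁺¹)]
        exact cfc_sub _ _ _ (by fun_prop) (by fun_prop)
      rw [e1, e2, e3, cfc_id' ℝ (b : A⁺¹)]
      rw [mul_assoc]
      congr 1
      rw [sub_mul, mul_sub, one_mul, mul_one, hcomm]
    have hkey1norm : ‖(1 - U) * (b : A⁺¹) * (1 - U)‖ ≤ ν⁻¹ := by
      rw [hkey1]
      exact norm_cfc_le (by positivity) fun t ht => aux_bound hν1 (hspec t ht)
    have h3 : ‖(a : A⁺¹) - U * (a : A⁺¹) * U‖ ≤ 2 * Real.sqrt ν⁻¹ * Real.sqrt ‖(a : A⁺¹)‖ :=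
      key_estimate ha' hab' hU_sa hU_norm (Real.sqrt_nonneg _)
        (by rw [Real.sq_sqrt (by positivity : (0:ℝ) ≤ ν⁻¹)]; exact hkey1norm)
    have h4 : ‖a - u * a * u‖ = ‖(a : A⁺¹) - U * (a : A⁺¹) * U‖ := by
      rw [← Unitization.norm_inr (𝕜 := ℂ), Unitization.inr_sub, Unitization.inr_mul,
        Unitization.inr_mul, hU]
    rw [Unitization.norm_inr] at h3
    rw [h4]
    refine lt_of_le_of_lt h3 ?_
    -- numeric: 2 √ν⁻¹ √‖a‖ < ε
    have hsq : (2 * Real.sqrt ν⁻¹ * Real.sqrt ‖a‖) ^ 2 = 4 * ν⁻¹ * ‖a‖ := by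
      rw [mul_pow, mul_pow, Real.sq_sqrt (by positivity : (0:ℝ) ≤ ν⁻¹),
        Real.sq_sqrt (norm_nonneg a)]
      ring
    have hlt : 4 * ν⁻¹ * ‖a‖ < ε ^ 2 := by
      have h5 : 4 * ‖a‖ < ν * ε ^ 2 := by
        have := (div_lt_iff₀ (by positivity : (0:ℝ) < ε ^ 2)).mp hνC
        linarith
      have h7 : 0 < ν⁻¹ := by positivity
      calc 4 * ν⁻¹ * ‖a‖ = ν⁻¹ * (4 * ‖a‖) := by ring
        _ < ν⁻¹ * (ν * ε ^ 2) := mul_lt_mul_of_pos_left h5 h7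
        _ = ε ^ 2 := by rw [← mul_assoc, inv_mul_cancel₀ hν0.ne', one_mul]
    refine lt_of_pow_lt_pow_left₀ 2 hε.le ?_
    rw [hsq]
    exact hlt

end CuntzAux

/-- Cuntz's lemma: in a C*-algebra with Property (SP), for positive `x` of norm one
there is a nonzero projection `p` in the hereditary subalgebra generated by `x` such
that every nonzero subprojection `q ≤ p` almost commutes with `x` and `‖q x q‖ > 1 - ε`. -/
theorem exists_proj_almost_fixed_by (A : Type*) [NonUnitalCStarAlgebra A]
    (hSP : PropertySP A) (x : A) (hx : ∃ z : A, x = star z * z) (hxnorm : ‖x‖ = 1)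
    (ε : ℝ) (hε : 0 < ε) :
    ∃ p : A, IsProjectionElem p ∧ p ≠ 0 ∧ p ∈ herSub x ∧
      ∀ q : A, IsProjectionElem q → q ≠ 0 → p * q = q →
        ‖q * x * q - q‖ < ε ∧ ‖q * x - x * q‖ < ε ∧ 1 - ε < ‖q * x * q‖ := by
  obtain ⟨z, hz⟩ := hx
  have hx_sa : IsSelfAdjoint x := by rw [hz]; exact IsSelfAdjoint.star_mul_self z
  -- the parameter δ
  set δ : ℝ := min (ε/5) (1/2) with hδdef
  have hδ0 : 0 < δ := lt_min (by positivity) one_half_pos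
  have hδ2 : δ ≤ 1/2 := min_le_right _ _
  have hδε2 : 2*δ < ε := by
    have : δ ≤ ε/5 := min_le_left _ _
    linarith
  have hδε4 : 4*δ < ε := by
    have : δ ≤ ε/5 := min_le_left _ _
    linarith
  -- spectrum facts
  letI := CStarAlgebra.spectralOrder (Unitization ℂ A)
  haveI := CStarAlgebra.spectralOrderedRing (Unitization ℂ A)
  have hx' : (0 : Unitization ℂ A) ≤ (x : Unitization ℂ A) := by
    have h1 : (x : Unitization ℂ A) = star (z : Unitization ℂ A) * (z : Unitization ℂ A) := by
      rw [hz, Unitization.inr_mul, Unitization.inr_star]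
    rw [h1]; exact star_mul_self_nonneg _
  have hspec : ∀ t ∈ quasispectrum ℝ x, 0 ≤ t ∧ t ≤ 1 := by
    intro t ht
    rw [Unitization.quasispectrum_eq_spectrum_inr' ℝ ℂ x] at ht
    refine ⟨spectrum_nonneg_of_nonneg hx' ht, ?_⟩
    have h2 := spectrum.norm_le_norm_of_mem ht
    rw [Unitization.norm_inr, hxnorm, Real.norm_eq_abs] at h2
    exact (le_abs_self t).trans h2
  have h1spec : (1 : ℝ) ∈ quasispectrum ℝ x := by
    rw [Unitization.quasispectrum_eq_spectrum_inr' ℝ ℂ x]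
    have := CStarAlgebra.norm_mem_spectrum_of_nonneg hx'
    rwa [Unitization.norm_inr, hxnorm] at this
  -- elements
  have hf_cont : Continuous (fun t : ℝ => max 0 (min ((t - (1 - δ)) * (2/δ)) 1)) := by fun_prop
  have hg_cont : Continuous (fun t : ℝ => max 0 (min ((t - (1 - 2*δ)) / δ) 1)) := by fun_prop
  have hk_cont : Continuous
      (fun t : ℝ => max 0 (min ((t - (1 - δ)) * (2/δ)) 1) / max t (1/2)) := by
    refine hf_cont.div (continuous_id.max continuous_const) ?_
    intro t
    exact (lt_max_of_lt_right one_half_pos).ne'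
  have hf0 : max 0 (min (((0:ℝ) - (1 - δ)) * (2/δ)) 1) = 0 := by
    apply aux_clamp_eq_zero
    apply mul_nonpos_of_nonpos_of_nonneg
    · linarith
    · positivity
  have hg0 : max 0 (min (((0:ℝ) - (1 - 2*δ)) / δ) 1) = 0 := by
    apply aux_clamp_eq_zero
    apply div_nonpos_of_nonpos_of_nonneg
    · linarith
    · positivity
  have hk0 : max 0 (min (((0:ℝ) - (1 - δ)) * (2/δ)) 1) / max (0:ℝ) (1/2) = 0 := by
    rw [hf0, zero_div]
  set y : A := cfcₙ (fun t : ℝ => max 0 (min ((t - (1 - δ)) * (2/δ)) 1)) x with hy_def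
  set w : A := cfcₙ (fun t : ℝ => max 0 (min ((t - (1 - 2*δ)) / δ) 1)) x with hw_def
  set c : A := cfcₙ (fun t : ℝ => max 0 (min ((t - (1 - δ)) * (2/δ)) 1) / max t (1/2)) x
    with hc_def
  have hy_sa : IsSelfAdjoint y := cfcₙ_predicate _ x
  have hw_sa : IsSelfAdjoint w := cfcₙ_predicate _ x
  have hy_xc : y = x * c := by
    have h1 : cfcₙ (fun t : ℝ =>
        t * (max 0 (min ((t - (1 - δ)) * (2/δ)) 1) / max t (1/2))) x
        = cfcₙ (fun t : ℝ => max 0 (min ((t - (1 - δ)) * (2/δ)) 1)) x :=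
      cfcₙ_congr fun t _ => aux_fk hδ0 hδ2 t
    have h2 : cfcₙ (fun t : ℝ =>
        t * (max 0 (min ((t - (1 - δ)) * (2/δ)) 1) / max t (1/2))) x
        = cfcₙ (fun t : ℝ => t) x * c := by
      rw [hc_def]
      exact cfcₙ_mul _ _ x (by fun_prop) rfl hk_cont.continuousOn hk0
    rw [hy_def, ← h1, h2, cfcₙ_id' ℝ x]
  have hy_cx : y = c * x := by
    have h1 : cfcₙ (fun t : ℝ =>
        (max 0 (min ((t - (1 - δ)) * (2/δ)) 1) / max t (1/2)) * t) x
        = cfcₙ (fun t : ℝ => max 0 (min ((t - (1 - δ)) * (2/δ)) 1)) x :=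
      cfcₙ_congr fun t _ => by rw [mul_comm]; exact aux_fk hδ0 hδ2 t
    have h2 : cfcₙ (fun t : ℝ =>
        (max 0 (min ((t - (1 - δ)) * (2/δ)) 1) / max t (1/2)) * t) x
        = c * cfcₙ (fun t : ℝ => t) x := by
      rw [hc_def]
      exact cfcₙ_mul _ _ x hk_cont.continuousOn hk0 (by fun_prop) rfl
    rw [hy_def, ← h1, h2, cfcₙ_id' ℝ x]
  have hwy : w * y = y := by
    have h1 : cfcₙ (fun t : ℝ => max 0 (min ((t - (1 - 2*δ)) / δ) 1)
        * max 0 (min ((t - (1 - δ)) * (2/δ)) 1)) x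
        = cfcₙ (fun t : ℝ => max 0 (min ((t - (1 - δ)) * (2/δ)) 1)) x :=
      cfcₙ_congr fun t _ => aux_gf hδ0 t
    have h2 : cfcₙ (fun t : ℝ => max 0 (min ((t - (1 - 2*δ)) / δ) 1)
        * max 0 (min ((t - (1 - δ)) * (2/δ)) 1)) x = w * y := by
      rw [hw_def, hy_def]
      exact cfcₙ_mul _ _ x (by fun_prop) hg0 (by fun_prop) hf0
    rw [← h2, h1, hy_def]
  -- B = herSub y
  have hSy_sub : {v : A | ∃ a : A, v = y * a * y} ⊆ herSub x := by
    rintro v ⟨a, rfl⟩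
    apply subset_closure
    refine ⟨c * a * c, ?_⟩
    nth_rewrite 1 [hy_xc]
    rw [hy_cx]
    simp only [mul_assoc]
  have hBsubX : herSub y ⊆ herSub x := closure_minimal hSy_sub isClosed_closure
  have hB : IsHerSub (herSub y) := by
    refine ⟨isClosed_closure, ?_, ?_, ?_, ?_, ?_, ?_⟩
    · exact subset_closure ⟨0, by simp⟩
    · intro a ha b hb
      refine map_mem_closure₂ continuous_add ha hb ?_
      rintro u ⟨r, rfl⟩ v ⟨s, rfl⟩
      exact ⟨r + s, by noncomm_ring⟩
    · intro a ha b hb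
      refine map_mem_closure₂ continuous_mul ha hb ?_
      rintro u ⟨r, rfl⟩ v ⟨s, rfl⟩
      exact ⟨r * (y * y) * s, by noncomm_ring⟩
    · intro cc a ha
      refine map_mem_closure (continuous_const_smul cc) ha ?_
      rintro u ⟨r, rfl⟩
      exact ⟨cc • r, by simp [mul_smul_comm, smul_mul_assoc]⟩
    · intro a ha
      refine map_mem_closure continuous_star ha ?_
      rintro u ⟨r, rfl⟩
      refine ⟨star r, ?_⟩
      rw [StarMul.star_mul, StarMul.star_mul, hy_sa.star_eq, mul_assoc]
    · intro a b ha hab hb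
      exact herSub_trans hb (mem_herSub_of_le ha hab)
  -- nonzero element of B
  have hy3_mem : y * y * y ∈ herSub y := subset_closure ⟨y, rfl⟩
  have hy3_ne : y * y * y ≠ 0 := by
    have h1 : cfcₙ (fun t : ℝ => max 0 (min ((t - (1 - δ)) * (2/δ)) 1) *
        (max 0 (min ((t - (1 - δ)) * (2/δ)) 1) * max 0 (min ((t - (1 - δ)) * (2/δ)) 1))) x
        = y * (y * y) := by
      rw [hy_def]
      rw [cfcₙ_mul _ _ x (by fun_prop) hf0 (by fun_prop) (by simp only [hf0, mul_zero]),
        cfcₙ_mul _ _ x (by fun_prop) hf0 (by fun_prop) hf0]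
    have h2 := norm_apply_le_norm_cfcₙ
      (fun t : ℝ => max 0 (min ((t - (1 - δ)) * (2/δ)) 1) *
        (max 0 (min ((t - (1 - δ)) * (2/δ)) 1) * max 0 (min ((t - (1 - δ)) * (2/δ)) 1))) x
      h1spec (by fun_prop) (by simp only [hf0, mul_zero]) hx_sa
    rw [h1] at h2
    simp only [aux_f_one hδ0, mul_one, norm_one] at h2
    intro hcon
    rw [← mul_assoc] at h2
    rw [hcon, norm_zero] at h2
    linarith
  -- apply SP
  obtain ⟨p, hpB, hp_proj, hp_ne⟩ := hSP (herSub y) hB ⟨y * y * y, hy3_mem, hy3_ne⟩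
  -- w acts as a unit on herSub y
  have hw_unit : ∀ v ∈ herSub y, w * v = v := by
    intro v hv
    have hclosed : IsClosed {v : A | w * v = v} :=
      isClosed_eq (continuous_const.mul continuous_id) continuous_id
    refine closure_minimal ?_ hclosed hv
    rintro v ⟨r, rfl⟩
    show w * (y * r * y) = y * r * y
    rw [← mul_assoc, ← mul_assoc, hwy]
  have hwp : w * p = p := hw_unit p hpB
  have hpw : p * w = p := by
    have h1 := congrArg star hwp
    rwa [StarMul.star_mul, hp_proj.1, hw_sa.star_eq] at h1
  refine ⟨p, hp_proj, hp_ne, hBsubX hpB, ?_⟩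
  intro q hq hq0 hpq
  have hqp : q * p = q := by
    have h1 : q * p = star (p * q) := by rw [StarMul.star_mul, hq.1, hp_proj.1]
    rw [h1, hpq, hq.1]
  have hwq : w * q = q := by rw [← hpq, ← mul_assoc, hwp]
  have hqw : q * w = q := by rw [← hqp, mul_assoc, hpw]
  have hq_norm : ‖q‖ = 1 := by
    have h1 : ‖star q * q‖ = ‖q‖ * ‖q‖ := CStarRing.norm_star_mul_self
    rw [hq.1, hq.2] at h1
    have h2 : ‖q‖ ≠ 0 := norm_ne_zero_iff.mpr hq0
    have h3 : ‖q‖ * 1 = ‖q‖ * ‖q‖ := by rw [mul_one]; exact h1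
    exact (mul_left_cancel₀ h2 h3).symm
  -- the distance estimates
  have hd1 : ‖x * w - w‖ ≤ 2*δ := by
    have h1 : cfcₙ (fun t : ℝ => t * max 0 (min ((t - (1 - 2*δ)) / δ) 1)
        - max 0 (min ((t - (1 - 2*δ)) / δ) 1)) x = x * w - w := by
      rw [hw_def, cfcₙ_sub _ _ x (by fun_prop) (by simp only [hg0, zero_mul, mul_zero])
          (by fun_prop) hg0,
        cfcₙ_mul _ _ x (by fun_prop) rfl (by fun_prop) hg0, cfcₙ_id' ℝ x]
    rw [← h1]
    refine norm_cfcₙ_le fun t ht => ?_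
    obtain ⟨ht0, ht1⟩ := hspec t ht
    rw [Real.norm_eq_abs]
    exact aux_g_est hδ0 ht0 ht1
  have hd2 : ‖w * x - w‖ ≤ 2*δ := by
    have h1 : w * x - w = star (x * w - w) := by
      rw [star_sub, StarMul.star_mul, hx_sa.star_eq, hw_sa.star_eq]
    rw [h1, norm_star]
    exact hd1
  have e_xq : x * q - q = (x * w - w) * q := by
    rw [sub_mul]
    congr 1
    · rw [mul_assoc, hwq]
    · rw [hwq]
  have e_qx : q * x - q = q * (w * x - w) := by
    rw [mul_sub]
    congr 1
    · rw [← mul_assoc, hqw]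
    · rw [hqw]
  have b_xq : ‖x * q - q‖ ≤ 2*δ := by
    rw [e_xq]
    calc ‖(x * w - w) * q‖ ≤ ‖x * w - w‖ * ‖q‖ := norm_mul_le _ _
      _ ≤ 2*δ := by rw [hq_norm, mul_one]; exact hd1
  have b_qx : ‖q * x - q‖ ≤ 2*δ := by
    rw [e_qx]
    calc ‖q * (w * x - w)‖ ≤ ‖q‖ * ‖w * x - w‖ := norm_mul_le _ _
      _ ≤ 2*δ := by rw [hq_norm, one_mul]; exact hd2
  have b_qxq : ‖q * x * q - q‖ ≤ 2*δ := by
    have h1 : q * x * q - q = q * (x * q - q) := by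
      rw [mul_sub, mul_assoc, hq.2]
    rw [h1]
    calc ‖q * (x * q - q)‖ ≤ ‖q‖ * ‖x * q - q‖ := norm_mul_le _ _
      _ ≤ 2*δ := by rw [hq_norm, one_mul]; exact b_xq
  refine ⟨lt_of_le_of_lt b_qxq hδε2, ?_, ?_⟩
  · have h1 : q * x - x * q = (q * x - q) - (x * q - q) := by abel
    rw [h1]
    calc ‖(q * x - q) - (x * q - q)‖ ≤ ‖q * x - q‖ + ‖x * q - q‖ := norm_sub_le _ _
      _ ≤ 4*δ := by linarith
      _ < ε := hδε4
  · have h1 := abs_norm_sub_norm_le (q * x * q) q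
    rw [abs_le] at h1
    have h2 := h1.1
    rw [hq_norm] at h2
    linarith
end
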